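/- arXiv:2304.11483 — 3 statements merged into one kernel-verified Lean document; each statement's English description precedes it below -/
import Mathlib

section
/- Over homogeneous interval structures, for all propositional letters p and q and every interval I, ⟨B⟩(p ∧ q) holds at I if and only if ⟨B⟩p ∧ ⟨B⟩q holds at I. -/
/-- An interval `[lo, hi]` over the natural numbers. -/
structure Itv where
  lo : ℕ
  hi : ℕ
  le : lo ≤ hi

/-- The singleton interval `[x, x]`. -/
def Itv.sing (x : ℕ) : Itv := ⟨x, x, le_rfl⟩

/-- `J` is a proper prefix of `I`. -/
def isPrefix (J I : Itv) : Prop := J.lo = I.lo ∧ J.hi < I.hi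

/-- `J` is a proper suffix of `I`. -/
def isSuffix (J I : Itv) : Prop := J.hi = I.hi ∧ I.lo < J.lo

/-- Formulas of the logic BE over a signature `Sig`. -/
inductive BE (Sig : Type) : Type
  | atom : Sig → BE Sig
  | neg : BE Sig → BE Sig
  | or : BE Sig → BE Sig → BE Sig
  | diaB : BE Sig → BE Sig
  | diaE : BE Sig → BE Sig

/-- Satisfaction of a BE formula at an interval, given a labelling `σ`. -/
def sat {Sig : Type} (σ : Itv → Set Sig) : Itv → BE Sig → Prop
  | I, .atom p => p ∈ σ I
  | I, .neg φ => ¬ sat σ I φ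
  | I, .or φ ψ => sat σ I φ ∨ sat σ I ψ
  | I, .diaB φ => ∃ J, isPrefix J I ∧ sat σ J φ
  | I, .diaE φ => ∃ J, isSuffix J I ∧ sat σ J φ

/-- Conjunction, defined from negation and disjunction. -/
def BE.and {Sig : Type} (a b : BE Sig) : BE Sig := .neg (.or (.neg a) (.neg b))

/-- The box modality `[B]`. -/
def BE.boxB {Sig : Type} (a : BE Sig) : BE Sig := .neg (.diaB (.neg a))

/-- The box modality `[E]`. -/
def BE.boxE {Sig : Type} (a : BE Sig) : BE Sig := .neg (.diaE (.neg a))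

/-- A contradiction `p ∧ ¬p`. -/
def BE.ffalse {Sig : Type} (p : Sig) : BE Sig := BE.and (.atom p) (.neg (.atom p))

/-- The formula `π = [B]⊥`, true exactly at singleton intervals. -/
def BE.pi {Sig : Type} (p : Sig) : BE Sig := BE.boxB (BE.ffalse p)

/-- A labelling is homogeneous if the label of any interval is the
intersection of the labels of its singleton sub-intervals. -/
def Homog {Sig : Type} (σ : Itv → Set Sig) : Prop :=
  ∀ I : Itv, σ I = {p | ∀ x, I.lo ≤ x → x ≤ I.hi → p ∈ σ (Itv.sing x)}

/-- Over homogeneous interval structures, `⟨B⟩(p ∧ q)` is equivalent to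
`⟨B⟩p ∧ ⟨B⟩q` for propositional letters `p`, `q`. -/
theorem diaB_and_distrib {Sig : Type} (σ : Itv → Set Sig) (h : Homog σ)
    (p q : Sig) (I : Itv) :
    sat σ I (.diaB (BE.and (.atom p) (.atom q))) ↔
    sat σ I (.diaB (.atom p)) ∧ sat σ I (.diaB (.atom q)) := by
  simp only [sat, BE.and, not_or, not_not]
  constructor
  · rintro ⟨J, hJ, hpq⟩
    exact ⟨⟨J, hJ, hpq.1⟩, ⟨J, hJ, hpq.2⟩⟩
  · rintro ⟨⟨J1, hJ1, hp⟩, ⟨J2, hJ2, hq⟩⟩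
    refine ⟨⟨I.lo, min J1.hi J2.hi, le_min (hJ1.1 ▸ J1.le) (hJ2.1 ▸ J2.le)⟩,
      ⟨rfl, lt_of_le_of_lt (min_le_left _ _) hJ1.2⟩, ?_, ?_⟩
    · rw [h] at hp ⊢
      intro x hx hx'
      exact hp x (hJ1.1 ▸ hx) (le_trans hx' (min_le_left _ _))
    · rw [h] at hq ⊢
      intro x hx hx'
      exact hq x (hJ2.1 ▸ hx) (le_trans hx' (min_le_right _ _))
end

section
/- In any homogeneous interval structure S, a propositional letter p holds at an interval I if and only if the formula everywhere(p) = (π ∧ p) ∨ (⟨B⟩(π ∧ p) ∧ ⟨E⟩(π ∧ p) ∧ [B](π ∨ ⟨E⟩(π ∧ p))) holds at I. -/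
/-- The formula `everywhere(p)`. -/
def everywhere {Sig : Type} (p : Sig) : BE Sig :=
  .or (BE.and (BE.pi p) (.atom p))
      (BE.and (.diaB (BE.and (BE.pi p) (.atom p)))
        (BE.and (.diaE (BE.and (BE.pi p) (.atom p)))
          (BE.boxB (.or (BE.pi p) (.diaE (BE.and (BE.pi p) (.atom p)))))))

lemma sat_and {Sig : Type} (σ : Itv → Set Sig) (a b : BE Sig) (I : Itv) :
    sat σ I (BE.and a b) ↔ sat σ I a ∧ sat σ I b := by
  change ¬(¬ sat σ I a ∨ ¬ sat σ I b) ↔ _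
  tauto

lemma sat_boxB {Sig : Type} (σ : Itv → Set Sig) (a : BE Sig) (I : Itv) :
    sat σ I (BE.boxB a) ↔ ∀ J, isPrefix J I → sat σ J a := by
  change ¬(∃ J, isPrefix J I ∧ ¬ sat σ J a) ↔ _
  push_neg
  rfl

lemma sat_pi_iff {Sig : Type} (σ : Itv → Set Sig) (p : Sig) (I : Itv) :
    sat σ I (BE.pi p) ↔ I.lo = I.hi := by
  rw [BE.pi, sat_boxB]
  constructor
  · intro hs
    by_contra hne
    have hlt : I.lo < I.hi := lt_of_le_of_ne I.le hne
    have := (sat_and σ _ _ _).1 (hs ⟨I.lo, I.lo, le_rfl⟩ ⟨rfl, hlt⟩)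
    exact this.2 this.1
  · intro heq J hJ
    have := J.le
    rcases hJ with ⟨h1, h2⟩
    omega

lemma sat_pip {Sig : Type} (σ : Itv → Set Sig) (p : Sig) (I : Itv) :
    sat σ I (BE.and (BE.pi p) (.atom p)) ↔ I.lo = I.hi ∧ p ∈ σ I := by
  rw [sat_and, sat_pi_iff]
  rfl

lemma sing_eq (I : Itv) (h : I.lo = I.hi) : I = Itv.sing I.lo := by
  cases I; simp [Itv.sing] at *; omega

/-- In a homogeneous interval structure, a letter `p` holds at `I` iff the
formula `everywhere(p)` holds at `I`. -/
theorem everywhere_iff {Sig : Type} (σ : Itv → Set Sig) (h : Homog σ)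
    (p : Sig) (I : Itv) :
    sat σ I (.atom p) ↔ sat σ I (everywhere p) := by

  have hI := h I
  have hmem : sat σ I (.atom p) ↔ p ∈ σ I := Iff.rfl
  rw [hmem]
  have hgoal : sat σ I (everywhere p) ↔
      (I.lo = I.hi ∧ p ∈ σ I) ∨
      ((∃ J, isPrefix J I ∧ (J.lo = J.hi ∧ p ∈ σ J)) ∧
       (∃ J, isSuffix J I ∧ (J.lo = J.hi ∧ p ∈ σ J)) ∧
       (∀ J, isPrefix J I → (J.lo = J.hi ∨
          ∃ K, isSuffix K J ∧ (K.lo = K.hi ∧ p ∈ σ K)))) := by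
    rw [everywhere]
    show sat σ I _ ∨ sat σ I _ ↔ _
    rw [sat_pip, sat_and, sat_and, sat_boxB]
    constructor
    · rintro (h1 | ⟨h1, h2, h3⟩)
      · exact Or.inl h1
      · refine Or.inr ⟨?_, ?_, ?_⟩
        · obtain ⟨J, hJ, hs⟩ := h1
          exact ⟨J, hJ, (sat_pip σ p J).1 hs⟩
        · obtain ⟨J, hJ, hs⟩ := h2
          exact ⟨J, hJ, (sat_pip σ p J).1 hs⟩
        · intro J hJ
          rcases h3 J hJ with hc | hc
          · exact Or.inl ((sat_pi_iff σ p J).1 hc)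
          · obtain ⟨K, hK, hs⟩ := hc
            exact Or.inr ⟨K, hK, (sat_pip σ p K).1 hs⟩
    · rintro (h1 | ⟨h1, h2, h3⟩)
      · exact Or.inl h1
      · refine Or.inr ⟨?_, ?_, ?_⟩
        · obtain ⟨J, hJ, hs⟩ := h1
          exact ⟨J, hJ, (sat_pip σ p J).2 hs⟩
        · obtain ⟨J, hJ, hs⟩ := h2
          exact ⟨J, hJ, (sat_pip σ p J).2 hs⟩
        · intro J hJ
          rcases h3 J hJ with hc | hc
          · exact Or.inl ((sat_pi_iff σ p J).2 hc)
          · obtain ⟨K, hK, hs⟩ := hc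
            exact Or.inr ⟨K, hK, (sat_pip σ p K).2 hs⟩
  rw [hgoal]
  constructor
  · intro hp
    have hall : ∀ x, I.lo ≤ x → x ≤ I.hi → p ∈ σ (Itv.sing x) := by
      rw [hI] at hp; exact hp
    by_cases hsing : I.lo = I.hi
    · exact Or.inl ⟨hsing, hp⟩
    · have hlt : I.lo < I.hi := lt_of_le_of_ne I.le hsing
      refine Or.inr ⟨⟨Itv.sing I.lo, ⟨rfl, hlt⟩, rfl, hall I.lo le_rfl I.le⟩,
        ⟨Itv.sing I.hi, ⟨rfl, hlt⟩, rfl, hall I.hi I.le le_rfl⟩, ?_⟩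
      intro J hJ
      by_cases hJs : J.lo = J.hi
      · exact Or.inl hJs
      · have hJlt : J.lo < J.hi := lt_of_le_of_ne J.le hJs
        rcases hJ with ⟨hJlo, hJhi⟩
        exact Or.inr ⟨Itv.sing J.hi, ⟨rfl, hJlt⟩, rfl,
          hall J.hi (by omega) (by omega)⟩
  · intro hs
    rw [hI]
    intro x hx1 hx2
    rcases hs with ⟨h1, h2⟩ | ⟨⟨J1, hJ1, hs1, hp1⟩, ⟨J2, hJ2, hs2, hp2⟩, h3⟩
    · have : x = I.lo := by omega
      subst this
      rwa [← sing_eq I h1]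
    · rcases hJ1 with ⟨hl1, hh1⟩
      rcases hJ2 with ⟨hl2, hh2⟩
      rcases eq_or_lt_of_le hx1 with heq | hlt1
      · rw [sing_eq J1 hs1, hl1] at hp1
        rw [← heq]; exact hp1
      rcases eq_or_lt_of_le hx2 with heq | hlt2
      · have : J2.lo = I.hi := by omega
        rw [sing_eq J2 hs2, this] at hp2
        rwa [← heq] at hp2
      · have hc := h3 ⟨I.lo, x, by omega⟩ ⟨rfl, hlt2⟩
        rcases hc with hc | ⟨K, ⟨hKh, hKl⟩, hKs, hKp⟩
        · simp at hc; omega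
        · have hK := K.le
          simp at hKh hKl
          have : K.lo = x := by omega
          rw [sing_eq K hKs, this] at hKp
          exact hKp
end

section
/- Let S be an interval structure, φ a BE formula in homogeneous normal form, and let I, J be non-singleton intervals with the same φ-profile. Then S,I ⊨ φ if and only if S,J ⊨ φ, provided φ is a Boolean combination of formulas of the form ⟨B⟩α with α ∈ B(φ), ⟨E⟩α with α ∈ E(φ), and formulas π and π∧p that are false at non-singleton intervals. -/
/-- The `φ`-profile of an interval, given the sets `Bφ` and `Eφ` of arguments
of outermost `⟨B⟩` and `⟨E⟩` subformulas of `φ`. -/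
def profile {Sig : Type} (σ : Itv → Set Sig) (Bφ Eφ : Set (BE Sig))
    (I : Itv) : Set (BE Sig) × Set (BE Sig) :=
  ({α | α ∈ Bφ ∧ ∃ J, isPrefix J I ∧ sat σ J α},
   {α | α ∈ Eφ ∧ ∃ J, isSuffix J I ∧ sat σ J α})

/-- Boolean combinations of formulas `⟨B⟩α` with `α ∈ Bφ`, `⟨E⟩α` with
`α ∈ Eφ`, and formulas (such as `π` and `π ∧ p`) that are false at all
non-singleton intervals. -/
inductive BC {Sig : Type} (σ : Itv → Set Sig) (Bφ Eφ : Set (BE Sig)) :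
    BE Sig → Prop
  | diaB {α} : α ∈ Bφ → BC σ Bφ Eφ (.diaB α)
  | diaE {α} : α ∈ Eφ → BC σ Bφ Eφ (.diaE α)
  | base {φ} : (∀ I : Itv, I.lo < I.hi → ¬ sat σ I φ) → BC σ Bφ Eφ φ
  | neg {φ} : BC σ Bφ Eφ φ → BC σ Bφ Eφ (.neg φ)
  | or {φ ψ} : BC σ Bφ Eφ φ → BC σ Bφ Eφ ψ → BC σ Bφ Eφ (.or φ ψ)

/-- Non-singleton intervals with the same `φ`-profile agree on `φ`, for `φ`
a Boolean combination as above. -/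
theorem profile_determines {Sig : Type} (σ : Itv → Set Sig)
    (Bφ Eφ : Set (BE Sig)) (φ : BE Sig) (hφ : BC σ Bφ Eφ φ)
    (I J : Itv) (hI : I.lo < I.hi) (hJ : J.lo < J.hi)
    (hprof : profile σ Bφ Eφ I = profile σ Bφ Eφ J) :
    sat σ I φ ↔ sat σ J φ := by
  have h1 := congrArg Prod.fst hprof
  have h2 := congrArg Prod.snd hprof
  simp only [profile] at h1 h2
  induction hφ with
  | @diaB α hα =>
      constructor <;> intro h
      · have : α ∈ {α | α ∈ Bφ ∧ ∃ K, isPrefix K J ∧ sat σ K α} := by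
          rw [← h1]; exact ⟨hα, h⟩
        exact this.2
      · have : α ∈ {α | α ∈ Bφ ∧ ∃ K, isPrefix K I ∧ sat σ K α} := by
          rw [h1]; exact ⟨hα, h⟩
        exact this.2
  | @diaE α hα =>
      constructor <;> intro h
      · have : α ∈ {α | α ∈ Eφ ∧ ∃ K, isSuffix K J ∧ sat σ K α} := by
          rw [← h2]; exact ⟨hα, h⟩
        exact this.2
      · have : α ∈ {α | α ∈ Eφ ∧ ∃ K, isSuffix K I ∧ sat σ K α} := by
          rw [h2]; exact ⟨hα, h⟩
        exact this.2
  | @base ψ hψ => simp [hψ I hI, hψ J hJ]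
  | @neg ψ _ ih => simp only [sat]; exact not_congr ih
  | @or ψ χ _ _ ih1 ih2 => simp only [sat]; exact or_congr ih1 ih2
end
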